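/- arXiv:2102.11234 — 4 statements merged into one kernel-verified Lean document; each statement's English description precedes it below -/
import Mathlib

section
/- Let d ≥ 1 and let α = (α_1, …, α_d) ∈ ℝ^d have at least one irrational coordinate, and fix 1 ≤ q ≤ ∞. For all n ≥ 2 and k ≥ 1 such that h_1(n+k) = h_1(n), one has h_{1+k}(n+k) = h_1(n). -/
open scoped BigOperators ENNReal NNReal

/-- Distance from a real number to the nearest integer (the torus norm on ℝ/ℤ). -/
noncomputable def nint (t : ℝ) : ℝ := |t - round t|

/-- The `L_q` distance (for `1 ≤ q ≤ ∞`) between two points of the torus `ℝ^d/ℤ^d`,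
computed on representatives in `ℝ^d`. -/
noncomputable def lqDist (q : ℝ≥0∞) {d : ℕ} (x y : Fin d → ℝ) : ℝ :=
  if q = ⊤ then ⨆ i, nint (x i - y i)
  else (∑ i, nint (x i - y i) ^ q.toReal) ^ (1 / q.toReal)

/-- The `n`-th point of the `d`-dimensional Kronecker sequence `z_n = nα + ℤ^d`
(as a representative in `ℝ^d`). -/
noncomputable def kron {d : ℕ} (α : Fin d → ℝ) (n : ℕ) : Fin d → ℝ :=
  fun c => (n : ℝ) * α c

/-- `L_q`-distance on the torus between the `i`-th and `j`-th points of the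
Kronecker sequence of `α`. -/
noncomputable def kronDist (q : ℝ≥0∞) {d : ℕ} (α : Fin d → ℝ) (i j : ℕ) : ℝ :=
  lqDist q (kron α i) (kron α j)

/-- The index `j ∈ {1, …, N} \ {i}` of the nearest neighbor of `z_i` in
`S_N = {z_1, …, z_N}` w.r.t. the `L_q` torus metric; ties are broken by taking
the largest such index. -/
noncomputable def nnIndex (q : ℝ≥0∞) {d : ℕ} (α : Fin d → ℝ) (N i : ℕ) : ℕ :=
  sSup {j : ℕ | j ∈ Finset.Icc 1 N ∧ j ≠ i ∧
    ∀ m ∈ Finset.Icc 1 N, m ≠ i → kronDist q α i j ≤ kronDist q α i m}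

/-- `h_i(N) = |j - i|` where `z_j` is the nearest neighbor of `z_i` in `S_N`:
the counting-metric distance of `z_i` to its nearest neighbor. -/
noncomputable def hFun (q : ℝ≥0∞) {d : ℕ} (α : Fin d → ℝ) (N i : ℕ) : ℕ :=
  Nat.dist (nnIndex q α N i) i

/-- `g_N(α, ℤ^d, ‖·‖_q)`: the number of distinct nearest neighbor distances
among `d_q(z_i, nn_1(z_i))`, `i = 1, …, N`. -/
noncomputable def gN (q : ℝ≥0∞) {d : ℕ} (α : Fin d → ℝ) (N : ℕ) : ℕ :=
  ((Finset.Icc 1 N).image (fun i => kronDist q α i (nnIndex q α N i))).card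

/-- The Gauss map `x ↦ {1/x}` generating the continued fraction expansion. -/
noncomputable def gaussMap (x : ℝ) : ℝ := Int.fract x⁻¹

/-- The partial quotients of the continued fraction expansion `[0; a_1, a_2, …]`
of an irrational `α ∈ (0,1)`: `a_n = ⌊1 / G^[n-1](α)⌋` (with `a_0 = 0`). -/
noncomputable def cfA (α : ℝ) : ℕ → ℕ
  | 0 => 0
  | n + 1 => (⌊(gaussMap^[n] α)⁻¹⌋).toNat

/-- The denominators of the convergents of the continued fraction of `α`:
`q_0 = 1`, `q_1 = a_1`, `q_n = a_n q_{n-1} + q_{n-2}`. -/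
noncomputable def cfQ (α : ℝ) : ℕ → ℕ
  | 0 => 1
  | 1 => cfA α 1
  | n + 2 => cfA α (n + 2) * cfQ α (n + 1) + cfQ α n


lemma nint_neg (x : ℝ) : nint (-x) = nint x := by
  unfold nint
  rw [abs_sub_round_eq_min, abs_sub_round_eq_min]
  rcases eq_or_ne (Int.fract x) 0 with h | h
  · rw [Int.fract_neg_eq_zero.mpr h, h]
  · rw [Int.fract_neg h]
    simp [min_comm]

lemma lqDist_congr (q : ℝ≥0∞) {d : ℕ} {x y x' y' : Fin d → ℝ}
    (h : ∀ c, nint (x c - y c) = nint (x' c - y' c)) : lqDist q x y = lqDist q x' y' := by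
  unfold lqDist
  split_ifs
  · exact iSup_congr h
  · congr 1
    exact Finset.sum_congr rfl fun i _ => by rw [h i]

lemma kronDist_shift (q : ℝ≥0∞) {d : ℕ} (α : Fin d → ℝ) (i j t : ℕ) :
    kronDist q α (i + t) (j + t) = kronDist q α i j := by
  refine lqDist_congr q fun c => ?_
  unfold kron
  congr 1
  push_cast
  ring

lemma kronDist_symm (q : ℝ≥0∞) {d : ℕ} (α : Fin d → ℝ) (i j : ℕ) :
    kronDist q α i j = kronDist q α j i := by
  refine lqDist_congr q fun c => ?_
  rw [← neg_sub, nint_neg]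

lemma nnIndex_spec (q : ℝ≥0∞) {d : ℕ} (α : Fin d → ℝ) (N i : ℕ)
    (hex : ∃ j ∈ Finset.Icc 1 N, j ≠ i) :
    (nnIndex q α N i ∈ Finset.Icc 1 N ∧ nnIndex q α N i ≠ i ∧
      ∀ m ∈ Finset.Icc 1 N, m ≠ i → kronDist q α i (nnIndex q α N i) ≤ kronDist q α i m) ∧
    ∀ j, (j ∈ Finset.Icc 1 N ∧ j ≠ i ∧
      ∀ m ∈ Finset.Icc 1 N, m ≠ i → kronDist q α i j ≤ kronDist q α i m) →
      j ≤ nnIndex q α N i := by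
  set A : Set ℕ := {j : ℕ | j ∈ Finset.Icc 1 N ∧ j ≠ i ∧
    ∀ m ∈ Finset.Icc 1 N, m ≠ i → kronDist q α i j ≤ kronDist q α i m} with hA
  have hdef : nnIndex q α N i = sSup A := rfl
  set T := (Finset.Icc 1 N).filter (· ≠ i) with hT
  have hTne : T.Nonempty := by
    obtain ⟨j, hj, hji⟩ := hex
    exact ⟨j, Finset.mem_filter.mpr ⟨hj, hji⟩⟩
  obtain ⟨j0, hj0T, hj0min⟩ := Finset.exists_min_image T (kronDist q α i) hTne
  have hj0T' := Finset.mem_filter.mp hj0T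
  have hj0 : j0 ∈ A := by
    refine ⟨hj0T'.1, hj0T'.2, fun m hm hmi => ?_⟩
    exact hj0min m (Finset.mem_filter.mpr ⟨hm, hmi⟩)
  have hbdd : BddAbove A := ⟨N, fun x hx => (Finset.mem_Icc.mp hx.1).2⟩
  have hmem := Nat.sSup_mem ⟨j0, hj0⟩ hbdd
  rw [hdef]
  exact ⟨hmem, fun j hj => le_csSup hbdd hj⟩

/-- For `α ∈ ℝ^d` (d ≥ 1) with at least one irrational coordinate and
`1 ≤ q ≤ ∞`: for all `n ≥ 2`, `k ≥ 1` with `h_1(n+k) = h_1(n)` one has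
`h_{1+k}(n+k) = h_1(n)`. -/
theorem statement0 (d : ℕ) (hd : 1 ≤ d) (α : Fin d → ℝ)
    (hirr : ∃ i, Irrational (α i)) (q : ℝ≥0∞) (hq : 1 ≤ q)
    (n k : ℕ) (hn : 2 ≤ n) (hk : 1 ≤ k)
    (h : hFun q α (n + k) 1 = hFun q α n 1) :
    hFun q α (n + k) (1 + k) = hFun q α n 1 := by
  have S1 := nnIndex_spec q α n 1 ⟨2, Finset.mem_Icc.mpr ⟨by omega, hn⟩, by omega⟩
  have S2 := nnIndex_spec q α (n + k) 1 ⟨2, Finset.mem_Icc.mpr ⟨by omega, by omega⟩, by omega⟩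
  have S3 := nnIndex_spec q α (n + k) (1 + k)
      ⟨1, Finset.mem_Icc.mpr ⟨le_refl 1, by omega⟩, by omega⟩
  set j1 := nnIndex q α n 1 with hj1def
  set j2 := nnIndex q α (n + k) 1 with hj2def
  set j3 := nnIndex q α (n + k) (1 + k) with hj3def
  obtain ⟨⟨hj1I, hj1ne, hj1min⟩, hj1max⟩ := S1
  obtain ⟨⟨hj2I, hj2ne, hj2min⟩, hj2max⟩ := S2
  obtain ⟨⟨hj3I, hj3ne, hj3min⟩, hj3max⟩ := S3
  rw [Finset.mem_Icc] at hj1I hj2I hj3I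
  -- j2 = j1
  have hj12 : j2 = j1 := by
    simp only [hFun, hj1def, hj2def, Nat.dist] at h
    omega
  rw [hj12] at hj2min
  -- minimality of j1 over the large range
  have hmin1 : ∀ m ∈ Finset.Icc 1 (n + k), m ≠ 1 →
      kronDist q α 1 j1 ≤ kronDist q α 1 m := hj2min
  -- Claim A : j1 + k is a candidate for (n+k, 1+k)
  have hshiftA : kronDist q α (1 + k) (j1 + k) = kronDist q α 1 j1 := kronDist_shift q α 1 j1 k
  have hA : j1 + k ≤ j3 := by
    apply hj3max
    refine ⟨Finset.mem_Icc.mpr ⟨by omega, by omega⟩, by omega, ?_⟩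
    intro m hm hm1k
    rw [Finset.mem_Icc] at hm
    rw [hshiftA]
    rcases le_or_gt (1 + k) m with hcase | hcase
    · -- m ≥ 1 + k : shift down by k
      have hmk : m - k + k = m := by omega
      have : kronDist q α (1 + k) m = kronDist q α 1 (m - k) := by
        conv_lhs => rw [← hmk]
        exact kronDist_shift q α 1 (m - k) k
      rw [this]
      exact hmin1 (m - k) (Finset.mem_Icc.mpr ⟨by omega, by omega⟩) (by omega)
    · -- m ≤ k : use symmetry and shift
      have hmk : 1 + (m - 1) = m := by omega
      have hmk2 : (2 + k - m) + (m - 1) = 1 + k := by omega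
      have : kronDist q α (1 + k) m = kronDist q α 1 (2 + k - m) := by
        rw [kronDist_symm]
        conv_lhs => rw [← hmk, ← hmk2]
        exact kronDist_shift q α 1 (2 + k - m) (m - 1)
      rw [this]
      exact hmin1 (2 + k - m) (Finset.mem_Icc.mpr ⟨by omega, by omega⟩) (by omega)
  -- Claim B : j3 ≤ j1 + k
  have hB : j3 ≤ j1 + k := by
    by_contra hcon
    push_neg at hcon
    have hj3k : j3 - k + k = j3 := by omega
    have hsh : kronDist q α 1 (j3 - k) = kronDist q α (1 + k) j3 := by
      conv_rhs => rw [← hj3k]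
      exact (kronDist_shift q α 1 (j3 - k) k).symm
    have hle : kronDist q α (1 + k) j3 ≤ kronDist q α 1 j1 := by
      rw [← hshiftA]
      exact hj3min (j1 + k) (Finset.mem_Icc.mpr ⟨by omega, by omega⟩) (by omega)
    have : j3 - k ≤ j2 := by
      apply hj2max
      refine ⟨Finset.mem_Icc.mpr ⟨by omega, by omega⟩, by omega, ?_⟩
      intro m hm hm1
      rw [hsh]
      exact hle.trans (hmin1 m hm hm1)
    omega
  have hj3 : j3 = j1 + k := le_antisymm hB hA
  simp only [hFun, ← hj1def, ← hj3def, hj3, Nat.dist]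
  omega
end

section
/- Let α_1 ∈ (1/2, 1) be irrational with continued fraction expansion [0; a_1, a_2, …] (so a_1 = 1), suppose a_i > 1 for all i ≥ 2, and let (q_k)_{k≥0} be the denominators of the convergents of α_1. Set α = (α_1, 1 − α_1) ∈ ℝ². Then for every i ≥ 1, every N with 2q_{i+1} + 1 ≤ N ≤ q_{i+2}, and every 1 ≤ q ≤ ∞, one has g_N(α, ℤ², ‖·‖_q) = 1; in particular there are infinitely many N ∈ ℕ with g_N(α, ℤ², ‖·‖_q) = 1. -/
open scoped BigOperators ENNReal NNReal

namespace S4aux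

/-! ### Basic facts about `nint` -/

theorem nint_nonneg (t : ℝ) : 0 ≤ nint t := abs_nonneg _

theorem nint_le (t : ℝ) (z : ℤ) : nint t ≤ |t - z| := round_le t z

theorem nint_neg (t : ℝ) : nint (-t) = nint t := by
  unfold nint
  apply le_antisymm
  · calc |(-t) - round (-t)| ≤ |(-t) - ((-(round t) : ℤ) : ℝ)| := round_le _ _
      _ = |t - (round t : ℝ)| := by
          push_cast
          rw [show (-t) - (-((round t : ℤ) : ℝ)) = -(t - round t) by ring, abs_neg]
  · calc |t - round t| ≤ |t - ((-(round (-t)) : ℤ) : ℝ)| := round_le _ _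
      _ = |(-t) - (round (-t) : ℝ)| := by
          push_cast
          rw [show t - (-((round (-t) : ℤ) : ℝ)) = -((-t) - round (-t)) by ring, abs_neg]

theorem nint_add_int (t : ℝ) (z : ℤ) : nint (t + z) = nint t := by
  unfold nint
  rw [round_add_intCast]
  push_cast
  ring_nf

theorem nint_int_sub (z : ℤ) (t : ℝ) : nint ((z : ℝ) - t) = nint t := by
  rw [show (z : ℝ) - t = -t + z by ring, nint_add_int, nint_neg]

/-! ### The Gauss map orbit -/

variable (α : ℝ)

theorem th_irr_mem (h1 : Irrational α) (h2 : α ∈ Set.Ioo (0:ℝ) 1) :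
    ∀ n, Irrational (gaussMap^[n] α) ∧ gaussMap^[n] α ∈ Set.Ioo (0:ℝ) 1 := by
  intro n
  induction n with
  | zero => exact ⟨h1, h2⟩
  | succ n ih =>
    obtain ⟨hi, hm⟩ := ih
    rw [Function.iterate_succ_apply']
    have hinv : Irrational (gaussMap^[n] α)⁻¹ := hi.inv
    have hirr : Irrational (gaussMap (gaussMap^[n] α)) := by
      show Irrational (Int.fract (gaussMap^[n] α)⁻¹)
      rw [Int.fract]
      exact hinv.sub_intCast _
    refine ⟨hirr, lt_of_le_of_ne ?_ (Ne.symm hirr.ne_zero), ?_⟩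
    · exact Int.fract_nonneg _
    · exact Int.fract_lt_one _

theorem cfA_cast (h1 : Irrational α) (h2 : α ∈ Set.Ioo (0:ℝ) 1) (n : ℕ) :
    ((cfA α (n+1) : ℤ) : ℝ) = (⌊(gaussMap^[n] α)⁻¹⌋ : ℝ) := by
  have hm := (th_irr_mem α h1 h2 n).2
  have hinv : 1 < (gaussMap^[n] α)⁻¹ := one_lt_inv_iff₀.mpr ⟨hm.1, hm.2⟩
  have hfl : (1 : ℤ) ≤ ⌊(gaussMap^[n] α)⁻¹⌋ := by
    rw [Int.le_floor]; exact_mod_cast hinv.le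
  simp only [cfA]
  rw [Int.toNat_of_nonneg (by omega)]

theorem cfA_one_le (h1 : Irrational α) (h2 : α ∈ Set.Ioo (0:ℝ) 1) (n : ℕ) :
    1 ≤ cfA α (n+1) := by
  have hm := (th_irr_mem α h1 h2 n).2
  have hinv : 1 < (gaussMap^[n] α)⁻¹ := one_lt_inv_iff₀.mpr ⟨hm.1, hm.2⟩
  have hfl : (1 : ℤ) ≤ ⌊(gaussMap^[n] α)⁻¹⌋ := by
    rw [Int.le_floor]; exact_mod_cast hinv.le
  simp only [cfA]
  omega

theorem th_succ (h1 : Irrational α) (h2 : α ∈ Set.Ioo (0:ℝ) 1) (n : ℕ) :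
    gaussMap^[n+1] α = (gaussMap^[n] α)⁻¹ - (cfA α (n+1) : ℝ) := by
  rw [Function.iterate_succ_apply']
  have hc : ((cfA α (n+1) : ℕ) : ℝ) = ((⌊(gaussMap^[n] α)⁻¹⌋ : ℤ) : ℝ) := by
    exact_mod_cast cfA_cast α h1 h2 n
  rw [hc]
  rfl

/-! ### Numerators and the product formula -/

/-- Numerators of convergents. -/
noncomputable def pcf (α : ℝ) : ℕ → ℕ
  | 0 => 0
  | 1 => 1
  | n + 2 => cfA α (n + 2) * pcf α (n + 1) + pcf α n

/-- `E n = ∏_{k=0}^{n} θ_k = |q_n α - p_n|`. -/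
noncomputable def EE (α : ℝ) (n : ℕ) : ℝ := ∏ k ∈ Finset.range (n+1), gaussMap^[k] α

theorem EE_pos (h1 : Irrational α) (h2 : α ∈ Set.Ioo (0:ℝ) 1) (n : ℕ) :
    0 < EE α n := by
  apply Finset.prod_pos
  intro k _
  exact (th_irr_mem α h1 h2 k).2.1

theorem conv_identity (h1 : Irrational α) (h2 : α ∈ Set.Ioo (0:ℝ) 1) :
    ∀ n, (cfQ α n : ℝ) * α - (pcf α n : ℝ) = (-1)^n * EE α n := by
  have key : ∀ n, ((cfQ α n : ℝ) * α - (pcf α n : ℝ) = (-1)^n * EE α n) ∧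
      ((cfQ α (n+1) : ℝ) * α - (pcf α (n+1) : ℝ) = (-1)^(n+1) * EE α (n+1)) := by
    intro n
    induction n with
    | zero =>
      constructor
      · simp [cfQ, pcf, EE]
      · have hα : α ≠ 0 := h2.1.ne'
        have hth := th_succ α h1 h2 0
        simp only [Function.iterate_zero, id_eq] at hth
        simp only [cfQ, pcf, EE]
        rw [Finset.prod_range_succ, Finset.prod_range_one]
        simp only [Function.iterate_zero, id_eq]
        rw [show (0:ℕ) + 1 = 1 from rfl] at hth
        rw [hth, mul_sub, mul_inv_cancel₀ hα]
        push_cast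
        ring
    | succ n ih =>
      obtain ⟨ihn, ihn1⟩ := ih
      refine ⟨ihn1, ?_⟩
      have hth : gaussMap^[n+2] α = (gaussMap^[n+1] α)⁻¹ - (cfA α (n+2) : ℝ) :=
        th_succ α h1 h2 (n+1)
      have hpos : (0:ℝ) < gaussMap^[n+1] α := (th_irr_mem α h1 h2 (n+1)).2.1
      have hEE2 : EE α (n+2) = EE α (n+1) * gaussMap^[n+2] α := by
        unfold EE; rw [Finset.prod_range_succ]
      have hEE1 : EE α (n+1) = EE α n * gaussMap^[n+1] α := by
        unfold EE; rw [Finset.prod_range_succ]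
      have hQ : (cfQ α (n+2) : ℝ) = (cfA α (n+2) : ℝ) * (cfQ α (n+1) : ℝ) + (cfQ α n : ℝ) := by
        simp only [cfQ]; push_cast; ring
      have hP : (pcf α (n+2) : ℝ) = (cfA α (n+2) : ℝ) * (pcf α (n+1) : ℝ) + (pcf α n : ℝ) := by
        simp only [pcf]; push_cast; ring
      rw [hQ, hP]
      have hkey : gaussMap^[n+1] α * gaussMap^[n+2] α
          = 1 - (cfA α (n+2) : ℝ) * gaussMap^[n+1] α := by
        rw [hth, mul_sub, mul_inv_cancel₀ (ne_of_gt hpos)]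
        ring
      calc ((cfA α (n+2) : ℝ) * (cfQ α (n+1) : ℝ) + (cfQ α n : ℝ)) * α
            - ((cfA α (n+2) : ℝ) * (pcf α (n+1) : ℝ) + (pcf α n : ℝ))
          = (cfA α (n+2) : ℝ) * ((cfQ α (n+1) : ℝ) * α - pcf α (n+1))
            + ((cfQ α n : ℝ) * α - pcf α n) := by ring
        _ = (cfA α (n+2) : ℝ) * ((-1)^(n+1) * EE α (n+1)) + (-1)^n * EE α n := by
            rw [ihn, ihn1]
        _ = (-1)^(n+2) * EE α (n+2) := by
            rw [hEE2, hEE1,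
              show EE α n * gaussMap^[n+1] α * gaussMap^[n+2] α
                = EE α n * (gaussMap^[n+1] α * gaussMap^[n+2] α) by ring,
              hkey]
            ring
  exact fun n => (key n).1

theorem det_identity : ∀ n, (pcf α (n+1) : ℤ) * (cfQ α n : ℤ)
    - (pcf α n : ℤ) * (cfQ α (n+1) : ℤ) = (-1)^n := by
  intro n
  induction n with
  | zero => simp [pcf, cfQ]
  | succ n ih =>
    have hQ : (cfQ α (n+2) : ℤ) = (cfA α (n+2) : ℤ) * (cfQ α (n+1) : ℤ) + (cfQ α n : ℤ) := by
      simp only [cfQ]; push_cast; ring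
    have hP : (pcf α (n+2) : ℤ) = (cfA α (n+2) : ℤ) * (pcf α (n+1) : ℤ) + (pcf α n : ℤ) := by
      simp only [pcf]; push_cast; ring
    rw [hQ, hP]
    linear_combination (-1 : ℤ) * ih

theorem cfQ_one_le (h1 : Irrational α) (h2 : α ∈ Set.Ioo (0:ℝ) 1) :
    ∀ n, 1 ≤ cfQ α n := by
  have key : ∀ n, 1 ≤ cfQ α n ∧ 1 ≤ cfQ α (n+1) := by
    intro n
    induction n with
    | zero =>
      refine ⟨by simp [cfQ], ?_⟩
      simpa [cfQ] using cfA_one_le α h1 h2 0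
    | succ n ih =>
      refine ⟨ih.2, ?_⟩
      show 1 ≤ cfQ α (n+2)
      have : cfQ α (n+2) = cfA α (n+2) * cfQ α (n+1) + cfQ α n := by simp [cfQ]
      omega
  exact fun n => (key n).1

theorem cfQ_lt (h1 : Irrational α) (h2 : α ∈ Set.Ioo (0:ℝ) 1) (n : ℕ) :
    cfQ α (n+1) < cfQ α (n+2) := by
  have h1' := cfQ_one_le α h1 h2 (n+1)
  have h2' := cfQ_one_le α h1 h2 n
  have ha := cfA_one_le α h1 h2 (n+1)
  have heq : cfQ α (n+2) = cfA α (n+2) * cfQ α (n+1) + cfQ α n := by simp [cfQ]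
  have hmul : 1 * cfQ α (n+1) ≤ cfA α (n+2) * cfQ α (n+1) :=
    Nat.mul_le_mul_right _ ha
  rw [one_mul] at hmul
  omega

/-! ### Best approximation -/

theorem sign_split (Qz Q' k x y : ℤ) (hQ : 1 ≤ Qz) (hQ' : 1 ≤ Q') (hk1 : 1 ≤ k)
    (hk2 : k < Q') (hk : x * Qz + y * Q' = k) :
    (y = 0 ∧ 1 ≤ x) ∨ (1 ≤ x ∧ y ≤ -1) ∨ (x ≤ -1 ∧ 1 ≤ y) := by
  rcases lt_trichotomy y 0 with hy | hy | hy
  · -- y ≤ -1 : show 1 ≤ x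
    have hy1 : y ≤ -1 := by omega
    right; left
    refine ⟨?_, hy1⟩
    by_contra h
    push_neg at h
    have hx0 : x ≤ 0 := by omega
    have h1 : x * Qz ≤ 0 := mul_nonpos_of_nonpos_of_nonneg hx0 (by omega)
    have h2 : y * Q' ≤ -1 * Q' := mul_le_mul_of_nonneg_right hy1 (by omega)
    omega
  · -- y = 0 : x * Qz = k, show 1 ≤ x
    left
    refine ⟨hy, ?_⟩
    rw [hy] at hk
    simp only [zero_mul, add_zero] at hk
    by_contra h
    push_neg at h
    have hx0 : x ≤ 0 := by omega
    have h1 : x * Qz ≤ 0 := mul_nonpos_of_nonpos_of_nonneg hx0 (by omega)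
    omega
  · -- 1 ≤ y : show x ≤ -1 (if x ≥ 0 then k ≥ Q')
    have hy1 : 1 ≤ y := by omega
    right; right
    refine ⟨?_, hy1⟩
    by_contra h
    push_neg at h
    have hx0 : 0 ≤ x := by omega
    have h1 : 0 ≤ x * Qz := mul_nonneg hx0 (by omega)
    have h2 : 1 * Q' ≤ y * Q' := mul_le_mul_of_nonneg_right hy1 (by omega)
    omega

theorem abs_lin_lower {A B : ℝ} (hA : 0 < A) (hB : 0 < B) (x y : ℤ)
    (hcase : (y = 0 ∧ 1 ≤ x) ∨ (1 ≤ x ∧ y ≤ -1) ∨ (x ≤ -1 ∧ 1 ≤ y)) :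
    A ≤ |(x:ℝ) * A - (y:ℝ) * B| := by
  rcases hcase with ⟨hy, hx⟩ | ⟨hx, hy⟩ | ⟨hx, hy⟩
  · subst hy
    have hxR : (1:ℝ) ≤ (x:ℝ) := by exact_mod_cast hx
    simp only [Int.cast_zero, zero_mul, sub_zero]
    rw [abs_of_nonneg (by nlinarith)]
    nlinarith
  · have hxR : (1:ℝ) ≤ (x:ℝ) := by exact_mod_cast hx
    have hyR : (y:ℝ) ≤ -1 := by exact_mod_cast hy
    calc A ≤ (x:ℝ) * A - (y:ℝ) * B := by nlinarith
      _ ≤ |(x:ℝ) * A - (y:ℝ) * B| := le_abs_self _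
  · have hxR : (x:ℝ) ≤ -1 := by exact_mod_cast hx
    have hyR : (1:ℝ) ≤ (y:ℝ) := by exact_mod_cast hy
    calc A ≤ -((x:ℝ) * A - (y:ℝ) * B) := by nlinarith
      _ ≤ |(x:ℝ) * A - (y:ℝ) * B| := neg_le_abs _

theorem best (h1 : Irrational α) (h2 : α ∈ Set.Ioo (0:ℝ) 1) (n k : ℕ)
    (hk1 : 1 ≤ k) (hk2 : k < cfQ α (n+1)) (ℓ : ℤ) :
    EE α n ≤ |(k : ℝ) * α - (ℓ : ℝ)| := by
  have hdet : (pcf α (n+1) : ℤ) * (cfQ α n : ℤ)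
      - (pcf α n : ℤ) * (cfQ α (n+1) : ℤ) = (-1)^n := det_identity α n
  have hs2 : ((-1:ℤ)^n) * ((-1:ℤ)^n) = 1 := by
    rw [← pow_add, ← two_mul, pow_mul]; norm_num
  set x : ℤ := (-1)^n * ((k : ℤ) * (pcf α (n+1) : ℤ) - ℓ * (cfQ α (n+1) : ℤ)) with hxdef
  set y : ℤ := (-1)^n * (ℓ * (cfQ α n : ℤ) - (k : ℤ) * (pcf α n : ℤ)) with hydef
  have hk' : x * (cfQ α n : ℤ) + y * (cfQ α (n+1) : ℤ) = (k : ℤ) := by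
    rw [hxdef, hydef]
    linear_combination ((k : ℤ) * (-1:ℤ)^n) * hdet + (k : ℤ) * hs2
  have hl : x * (pcf α n : ℤ) + y * (pcf α (n+1) : ℤ) = ℓ := by
    rw [hxdef, hydef]
    linear_combination ((ℓ : ℤ) * (-1:ℤ)^n) * hdet + (ℓ : ℤ) * hs2
  have hkR : (x : ℝ) * (cfQ α n : ℝ) + (y : ℝ) * (cfQ α (n+1) : ℝ) = (k : ℝ) := by
    exact_mod_cast hk'
  have hlR : (x : ℝ) * (pcf α n : ℝ) + (y : ℝ) * (pcf α (n+1) : ℝ) = (ℓ : ℝ) := by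
    exact_mod_cast hl
  have hid : (k : ℝ) * α - (ℓ : ℝ)
      = (x : ℝ) * ((cfQ α n : ℝ) * α - (pcf α n : ℝ))
        + (y : ℝ) * ((cfQ α (n+1) : ℝ) * α - (pcf α (n+1) : ℝ)) := by
    rw [← hkR, ← hlR]
    ring
  rw [hid, conv_identity α h1 h2 n, conv_identity α h1 h2 (n+1)]
  have habs : (x : ℝ) * ((-1:ℝ)^n * EE α n) + (y : ℝ) * ((-1:ℝ)^(n+1) * EE α (n+1))
      = (-1:ℝ)^n * ((x : ℝ) * EE α n - (y : ℝ) * EE α (n+1)) := by ring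
  rw [habs, abs_mul, abs_pow, abs_neg, abs_one, one_pow, one_mul]
  apply abs_lin_lower (EE_pos α h1 h2 n) (EE_pos α h1 h2 (n+1))
  apply sign_split (cfQ α n : ℤ) (cfQ α (n+1) : ℤ) (k : ℤ) x y
  · exact_mod_cast cfQ_one_le α h1 h2 n
  · exact_mod_cast cfQ_one_le α h1 h2 (n+1)
  · exact_mod_cast hk1
  · exact_mod_cast hk2
  · exact hk'

theorem nint_lower (h1 : Irrational α) (h2 : α ∈ Set.Ioo (0:ℝ) 1) (n k : ℕ)
    (hk1 : 1 ≤ k) (hk2 : k < cfQ α (n+1)) :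
    EE α n ≤ nint ((k : ℝ) * α) :=
  best α h1 h2 n k hk1 hk2 (round ((k : ℝ) * α))

theorem nint_cfQ (h1 : Irrational α) (h2 : α ∈ Set.Ioo (0:ℝ) 1) (n : ℕ) :
    nint ((cfQ α (n+1) : ℝ) * α) = EE α (n+1) := by
  apply le_antisymm
  · calc nint ((cfQ α (n+1) : ℝ) * α) ≤ |(cfQ α (n+1) : ℝ) * α - ((pcf α (n+1) : ℤ) : ℝ)| :=
        nint_le _ _
      _ = |(-1:ℝ)^(n+1) * EE α (n+1)| := by
          rw [show (((pcf α (n+1) : ℤ)) : ℝ) = (pcf α (n+1) : ℝ) by push_cast; ring,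
            conv_identity α h1 h2 (n+1)]
      _ = EE α (n+1) := by
          rw [abs_mul, abs_pow, abs_neg, abs_one, one_pow, one_mul,
            abs_of_pos (EE_pos α h1 h2 (n+1))]
  · exact nint_lower α h1 h2 (n+1) (cfQ α (n+1)) (cfQ_one_le α h1 h2 (n+1))
      (cfQ_lt α h1 h2 n)



/-! ### The `L_q` distance for `α = (α₁, 1 - α₁)` is proportional to `nint` -/

theorem lq_const_pos (q : ℝ≥0∞) :
    0 < (if q = ⊤ then (1:ℝ) else (2:ℝ) ^ (1 / q.toReal)) := by
  split
  · norm_num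
  · exact Real.rpow_pos_of_pos (by norm_num) _

theorem kronDist_eq (q : ℝ≥0∞) (hq : 1 ≤ q) (α1 : ℝ) (j m : ℕ) :
    kronDist q ![α1, 1 - α1] j m
      = (if q = ⊤ then (1:ℝ) else (2:ℝ) ^ (1 / q.toReal))
          * nint (((j:ℝ) - (m:ℝ)) * α1) := by
  have hc : ∀ c : Fin 2, nint (kron ![α1, 1-α1] j c - kron ![α1, 1-α1] m c)
      = nint (((j:ℝ) - (m:ℝ)) * α1) := by
    rw [Fin.forall_fin_two]
    constructor
    · simp only [kron, Matrix.cons_val_zero]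
      congr 1
      ring
    · simp only [kron, Matrix.cons_val_one, Matrix.head_cons, Matrix.cons_val_zero]
      have hrw : (j:ℝ) * (1 - α1) - (m:ℝ) * (1 - α1)
          = ((((j:ℤ) - (m:ℤ)) : ℤ) : ℝ) - (((j:ℝ) - (m:ℝ)) * α1) := by push_cast; ring
      rw [hrw, nint_int_sub]
  unfold kronDist lqDist
  split_ifs with h
  · rw [one_mul]
    have hrw : (⨆ c : Fin 2, nint (kron ![α1, 1-α1] j c - kron ![α1, 1-α1] m c))
        = ⨆ _ : Fin 2, nint (((j:ℝ) - (m:ℝ)) * α1) := by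
      congr 1
      funext c
      exact hc c
    rw [hrw, ciSup_const]
  · have h0 : q ≠ 0 := by
      intro h0
      rw [h0] at hq
      simp at hq
    have hp : q.toReal ≠ 0 := ENNReal.toReal_ne_zero.mpr ⟨h0, h⟩
    have ht : 0 ≤ nint (((j:ℝ) - (m:ℝ)) * α1) := nint_nonneg _
    have hsum : ∑ c : Fin 2, nint (kron ![α1,1-α1] j c - kron ![α1,1-α1] m c) ^ q.toReal
        = 2 * nint (((j:ℝ)-(m:ℝ))*α1) ^ q.toReal := by
      rw [Fin.sum_univ_two, hc 0, hc 1]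
      ring
    rw [hsum, Real.mul_rpow (by norm_num) (Real.rpow_nonneg ht _),
      ← Real.rpow_mul ht, mul_one_div_cancel hp, Real.rpow_one]

/-! ### Each point of `S_N` has nearest-neighbor distance `C · E_{i+1}` -/

theorem main_point (α1 : ℝ) (h1 : Irrational α1) (h2 : α1 ∈ Set.Ioo (0:ℝ) 1)
    (q : ℝ≥0∞) (hq : 1 ≤ q) (i N : ℕ)
    (hN1 : 2 * cfQ α1 (i+1) + 1 ≤ N) (hN2 : N ≤ cfQ α1 (i+2))
    (j : ℕ) (hj : j ∈ Finset.Icc 1 N) :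
    kronDist q ![α1, 1-α1] j (nnIndex q ![α1,1-α1] N j)
      = (if q = ⊤ then (1:ℝ) else (2:ℝ) ^ (1 / q.toReal)) * EE α1 (i+1) := by
  set C := (if q = ⊤ then (1:ℝ) else (2:ℝ) ^ (1 / q.toReal)) with hC
  have hCpos : 0 < C := lq_const_pos q
  obtain ⟨hj1, hj2⟩ := Finset.mem_Icc.mp hj
  have hQ1 : 1 ≤ cfQ α1 (i+1) := cfQ_one_le α1 h1 h2 (i+1)
  have hQeq : cfQ α1 (i+1+1) = cfQ α1 (i+2) := rfl
  -- lower bound for every admissible m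
  have hlow : ∀ m ∈ Finset.Icc 1 N, m ≠ j → EE α1 (i+1) ≤ nint (((j:ℝ)-(m:ℝ))*α1) := by
    intro m hm hne
    obtain ⟨hm1, hm2⟩ := Finset.mem_Icc.mp hm
    rcases lt_or_gt_of_ne hne with hlt | hgt
    · -- m < j
      have hcast : (j:ℝ) - (m:ℝ) = ((j - m : ℕ) : ℝ) := by
        rw [Nat.cast_sub hlt.le]
      rw [hcast]
      exact nint_lower α1 h1 h2 (i+1) (j - m) (by omega) (by omega)
    · -- j < m
      have hcast : ((j:ℝ) - (m:ℝ)) * α1 = -(((m - j : ℕ) : ℝ) * α1) := by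
        rw [Nat.cast_sub hgt.le]
        ring
      rw [hcast, nint_neg]
      exact nint_lower α1 h1 h2 (i+1) (m - j) (by omega) (by omega)
  have hval : nint ((cfQ α1 (i+1) : ℝ) * α1) = EE α1 (i+1) := nint_cfQ α1 h1 h2 i
  -- a witness m₀ at distance exactly E_{i+1}
  obtain ⟨m0, hm0mem, hm0ne, hm0dist⟩ :
      ∃ m0, m0 ∈ Finset.Icc 1 N ∧ m0 ≠ j ∧
        nint (((j:ℝ)-(m0:ℝ))*α1) = EE α1 (i+1) := by
    by_cases hcase : j + cfQ α1 (i+1) ≤ N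
    · refine ⟨j + cfQ α1 (i+1), Finset.mem_Icc.mpr ⟨by omega, hcase⟩, by omega, ?_⟩
      have hcast : ((j:ℝ) - ((j + cfQ α1 (i+1) : ℕ) : ℝ)) * α1
          = -((cfQ α1 (i+1) : ℝ) * α1) := by
        push_cast
        ring
      rw [hcast, nint_neg, hval]
    · refine ⟨j - cfQ α1 (i+1), Finset.mem_Icc.mpr ⟨by omega, by omega⟩, by omega, ?_⟩
      have hcast : ((j:ℝ) - ((j - cfQ α1 (i+1) : ℕ) : ℝ)) * α1
          = (cfQ α1 (i+1) : ℝ) * α1 := by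
        rw [Nat.cast_sub (by omega)]
        ring
      rw [hcast, hval]
  -- m₀ belongs to the minimizer set
  have hm0S : m0 ∈ {m : ℕ | m ∈ Finset.Icc 1 N ∧ m ≠ j ∧
      ∀ m' ∈ Finset.Icc 1 N, m' ≠ j →
        kronDist q ![α1,1-α1] j m ≤ kronDist q ![α1,1-α1] j m'} := by
    refine ⟨hm0mem, hm0ne, ?_⟩
    intro m' hm' hne'
    rw [kronDist_eq q hq, kronDist_eq q hq, hm0dist]
    exact mul_le_mul_of_nonneg_left (hlow m' hm' hne') hCpos.le
  have hbdd : BddAbove {m : ℕ | m ∈ Finset.Icc 1 N ∧ m ≠ j ∧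
      ∀ m' ∈ Finset.Icc 1 N, m' ≠ j →
        kronDist q ![α1,1-α1] j m ≤ kronDist q ![α1,1-α1] j m'} :=
    ⟨N, fun x hx => (Finset.mem_Icc.mp hx.1).2⟩
  have hmemS : nnIndex q ![α1,1-α1] N j ∈ {m : ℕ | m ∈ Finset.Icc 1 N ∧ m ≠ j ∧
      ∀ m' ∈ Finset.Icc 1 N, m' ≠ j →
        kronDist q ![α1,1-α1] j m ≤ kronDist q ![α1,1-α1] j m'} := by
    unfold nnIndex
    exact Nat.sSup_mem ⟨m0, hm0S⟩ hbdd
  obtain ⟨hJmem, hJne, hJmin⟩ := hmemS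
  apply le_antisymm
  · calc kronDist q ![α1,1-α1] j (nnIndex q ![α1,1-α1] N j)
        ≤ kronDist q ![α1,1-α1] j m0 := hJmin m0 hm0mem hm0ne
      _ = C * EE α1 (i+1) := by rw [kronDist_eq q hq, hm0dist]
  · rw [kronDist_eq q hq]
    exact mul_le_mul_of_nonneg_left (hlow _ hJmem hJne) hCpos.le

theorem cfQ_bound (α : ℝ) (h1 : Irrational α) (h2 : α ∈ Set.Ioo (0:ℝ) 1) (n : ℕ)
    (ha2 : 2 ≤ cfA α (n+2)) : 2 * cfQ α (n+1) + 1 ≤ cfQ α (n+2) := by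
  have heq : cfQ α (n+2) = cfA α (n+2) * cfQ α (n+1) + cfQ α n := by simp [cfQ]
  have h := cfQ_one_le α h1 h2 n
  have hb : 2 * cfQ α (n+1) ≤ cfA α (n+2) * cfQ α (n+1) := Nat.mul_le_mul_right _ ha2
  omega

end S4aux

/-- For irrational `α_1 ∈ (1/2, 1)` with partial quotients `a_i > 1` for all
`i ≥ 2`, convergent denominators `(q_k)`, and `α = (α_1, 1 - α_1)`: for every `i ≥ 1`,
every `N` with `2q_{i+1} + 1 ≤ N ≤ q_{i+2}` and every `1 ≤ q ≤ ∞` one has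
`g_N(α, ℤ², ‖·‖_q) = 1`; in particular `g_N = 1` for infinitely many `N`. -/
theorem statement4 (α1 : ℝ) (hmem : α1 ∈ Set.Ioo (1/2 : ℝ) 1) (hirr : Irrational α1)
    (ha : ∀ i, 2 ≤ i → 1 < cfA α1 i) (q : ℝ≥0∞) (hq : 1 ≤ q) :
    (∀ i, 1 ≤ i → ∀ N, 2 * cfQ α1 (i + 1) + 1 ≤ N → N ≤ cfQ α1 (i + 2) →
      gN q ![α1, 1 - α1] N = 1) ∧
    {N : ℕ | gN q ![α1, 1 - α1] N = 1}.Infinite := by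
  have h2' : α1 ∈ Set.Ioo (0:ℝ) 1 := ⟨lt_trans (by norm_num) hmem.1, hmem.2⟩
  have part1 : ∀ i, 1 ≤ i → ∀ N, 2 * cfQ α1 (i + 1) + 1 ≤ N → N ≤ cfQ α1 (i + 2) →
      gN q ![α1, 1 - α1] N = 1 := by
    intro i _ N hN1 hN2
    have hQ1 : 1 ≤ cfQ α1 (i+1) := S4aux.cfQ_one_le α1 hirr h2' (i+1)
    have hNe : (Finset.Icc 1 N).Nonempty := ⟨1, Finset.mem_Icc.mpr ⟨le_refl 1, by omega⟩⟩
    have hconst : ∀ j ∈ Finset.Icc 1 N,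
        kronDist q ![α1, 1-α1] j (nnIndex q ![α1,1-α1] N j)
          = (if q = ⊤ then (1:ℝ) else (2:ℝ) ^ (1 / q.toReal)) * S4aux.EE α1 (i+1) :=
      fun j hj => S4aux.main_point α1 hirr h2' q hq i N hN1 hN2 j hj
    unfold gN
    have hle : ((Finset.Icc 1 N).image
        (fun j => kronDist q ![α1, 1-α1] j (nnIndex q ![α1,1-α1] N j))).card ≤ 1 := by
      apply Finset.card_le_one.mpr
      intro a ha' b hb'
      obtain ⟨ja, hja, rfl⟩ := Finset.mem_image.mp ha'
      obtain ⟨jb, hjb, rfl⟩ := Finset.mem_image.mp hb'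
      rw [hconst ja hja, hconst jb hjb]
    have hpos : 0 < ((Finset.Icc 1 N).image
        (fun j => kronDist q ![α1, 1-α1] j (nnIndex q ![α1,1-α1] N j))).card :=
      Finset.card_pos.mpr (hNe.image _)
    omega
  refine ⟨part1, ?_⟩
  apply Set.infinite_of_injective_forall_mem
    (f := fun m : ℕ => 2 * cfQ α1 (m + 2) + 1)
  · apply StrictMono.injective
    apply strictMono_nat_of_lt_succ
    intro m
    have hlt : cfQ α1 (m+1+1) < cfQ α1 (m+1+2) := S4aux.cfQ_lt α1 hirr h2' (m+1)
    have he : cfQ α1 (m+1+1) = cfQ α1 (m+2) := rfl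
    show 2 * cfQ α1 (m + 2) + 1 < 2 * cfQ α1 (m + 1 + 2) + 1
    omega
  · intro m
    show gN q ![α1, 1 - α1] (2 * cfQ α1 (m + 2) + 1) = 1
    exact part1 (m+1) (by omega) (2 * cfQ α1 (m + 2) + 1) le_rfl
      (S4aux.cfQ_bound α1 hirr h2' (m+1) (ha (m+1+2) (by omega)))
end

section
/- Let α ∈ (0,1) be irrational with continued fraction expansion [0; a_1, a_2, …] and convergent denominators (q_n)_{n≥0}. Let k, k' be indices with k + 2 ≤ k' and k' ≥ 3. Set b := gcd(q_k, q_{k'−2}), c := q_k / b, d := gcd(c, q_{k'−3}), and e := c / d. If gcd(d, a_{k'−1}) = 1 and e divides a_{k'−1}, then gcd(q_{k'−1}, q_k) = 1. -/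
open scoped BigOperators ENNReal NNReal

theorem cfQ_consec_coprime (α : ℝ) : ∀ n, Nat.Coprime (cfQ α (n + 1)) (cfQ α n) := by
  intro n
  induction n with
  | zero => simp [cfQ, Nat.coprime_one_right]
  | succ n ih =>
    have hrec : cfQ α (n + 2) = cfA α (n + 2) * cfQ α (n + 1) + cfQ α n := rfl
    rw [hrec, add_comm, mul_comm]
    exact (Nat.coprime_add_mul_left_left _ _ _).mpr ih.symm

/-- For irrational `α ∈ (0,1)` with partial quotients `(a_i)` and convergent
denominators `(q_n)`, indices `k + 2 ≤ k'`, `k' ≥ 3`; with `b = gcd(q_k, q_{k'-2})`,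
`c = q_k / b`, `d = gcd(c, q_{k'-3})`, `e = c / d`: if `gcd(d, a_{k'-1}) = 1` and
`e ∣ a_{k'-1}`, then `gcd(q_{k'-1}, q_k) = 1`. -/
theorem statement7 (α : ℝ) (hmem : α ∈ Set.Ioo (0 : ℝ) 1) (hirr : Irrational α)
    (k k' : ℕ) (hkk' : k + 2 ≤ k') (hk3 : 3 ≤ k')
    (b c d e : ℕ)
    (hb : b = Nat.gcd (cfQ α k) (cfQ α (k' - 2)))
    (hc : c = cfQ α k / b)
    (hd : d = Nat.gcd c (cfQ α (k' - 3)))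
    (he : e = c / d)
    (h1 : Nat.gcd d (cfA α (k' - 1)) = 1)
    (h2 : e ∣ cfA α (k' - 1)) :
    Nat.gcd (cfQ α (k' - 1)) (cfQ α k) = 1 := by
  obtain ⟨m, rfl⟩ : ∃ m, k' = m + 3 := ⟨k' - 3, by omega⟩
  have e1 : m + 3 - 1 = m + 2 := by omega
  have e2 : m + 3 - 2 = m + 1 := by omega
  have e3 : m + 3 - 3 = m := by omega
  rw [e1] at h1 h2 ⊢
  rw [e2] at hb
  rw [e3] at hd
  set a := cfA α (m + 2) with ha
  set q0 := cfQ α m with hq0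
  set q1 := cfQ α (m + 1) with hq1
  set qk := cfQ α k with hqk
  have hrec : cfQ α (m + 2) = a * q1 + q0 := rfl
  have hcop : Nat.Coprime q1 q0 := cfQ_consec_coprime α m
  have hbdvd : b ∣ qk := hb ▸ Nat.gcd_dvd_left _ _
  have hbdvd1 : b ∣ q1 := hb ▸ Nat.gcd_dvd_right _ _
  have hbc : b * c = qk := by rw [hc]; exact Nat.mul_div_cancel' hbdvd
  have hddvd : d ∣ c := hd ▸ Nat.gcd_dvd_left _ _
  have hddvd0 : d ∣ q0 := hd ▸ Nat.gcd_dvd_right _ _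
  have hde : d * e = c := by rw [he]; exact Nat.mul_div_cancel' hddvd
  by_contra hg
  obtain ⟨p, pp, hpdvd⟩ := Nat.exists_prime_and_dvd hg
  have hp2 : p ∣ cfQ α (m + 2) := hpdvd.trans (Nat.gcd_dvd_left _ _)
  have hpk : p ∣ qk := hpdvd.trans (Nat.gcd_dvd_right _ _)
  rw [hrec] at hp2
  by_cases hpq1 : p ∣ q1
  · have hpq0 : p ∣ q0 := (Nat.dvd_add_right (hpq1.mul_left a)).mp hp2
    have : p ∣ Nat.gcd q1 q0 := Nat.dvd_gcd hpq1 hpq0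
    rw [hcop] at this
    exact pp.one_lt.ne' (Nat.eq_one_of_dvd_one this)
  · have hpb : ¬ p ∣ b := fun h => hpq1 (h.trans hbdvd1)
    have hpc : p ∣ c := by
      rcases (Nat.Prime.dvd_mul pp).mp (hbc ▸ hpk) with h | h
      · exact absurd h hpb
      · exact h
    have hpa : p ∣ a := by
      rcases (Nat.Prime.dvd_mul pp).mp (hde ▸ hpc) with h | h
      · -- p ∣ d, so p ∣ q0, so p ∣ a * q1, so p ∣ a
        have hpq0 : p ∣ q0 := h.trans hddvd0
        have : p ∣ a * q1 := (Nat.dvd_add_iff_left hpq0).mpr hp2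
        rcases (Nat.Prime.dvd_mul pp).mp this with h' | h'
        · exact h'
        · exact absurd h' hpq1
      · exact h.trans h2
    have hpaq1 : p ∣ a * q1 := hpa.mul_right q1
    have hpq0 : p ∣ q0 := (Nat.dvd_add_right hpaq1).mp hp2
    have hpd : p ∣ d := hd ▸ Nat.dvd_gcd hpc hpq0
    have : p ∣ Nat.gcd d a := Nat.dvd_gcd hpd hpa
    rw [h1] at this
    exact pp.one_lt.ne' (Nat.eq_one_of_dvd_one this)
end

section
/- Let α ∈ (0,1) be irrational with continued fraction expansion [0; a_1, a_2, …] and convergent denominators (q_n)_{n≥0}, and fix i ≥ 1. Then for every integer n with q_i ≤ n ≤ q_{i+1} that is not of the form n = m q_i for some 1 ≤ m ≤ a_{i+1}, nor of the form n = q_{i+1} − m q_i for some 0 ≤ m ≤ a_{i+1} − 1, one has ‖n α‖ > ‖a_{i+1} q_i α‖. In other words, among the points {n α} with q_i ≤ n ≤ q_{i+1}, the 2a_{i+1} points closest to the origin in the torus norm are exactly those with n ∈ {q_{i+1}} ∪ {m q_i : 1 ≤ m ≤ a_{i+1}} ∪ {q_{i+1} − m q_i : 1 ≤ m ≤ a_{i+1}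 − 1}. -/
open scoped BigOperators ENNReal NNReal

noncomputable def cfTh (α : ℝ) (k : ℕ) : ℝ := gaussMap^[k] α

noncomputable def cfP (α : ℝ) : ℕ → ℤ
  | 0 => 0
  | 1 => 1
  | n + 2 => cfA α (n + 2) * cfP α (n + 1) + cfP α n

noncomputable def cfEta (α : ℝ) (k : ℕ) : ℝ := ∏ j ∈ Finset.range (k + 1), cfTh α j

lemma cfTh_zero (α : ℝ) : cfTh α 0 = α := rfl

lemma cfTh_succ (α : ℝ) (k : ℕ) : cfTh α (k + 1) = Int.fract (cfTh α k)⁻¹ := by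
  unfold cfTh
  rw [Function.iterate_succ_apply']
  rfl

lemma cfTh_prop (α : ℝ) (hmem : α ∈ Set.Ioo (0 : ℝ) 1) (hirr : Irrational α) (k : ℕ) :
    Irrational (cfTh α k) ∧ cfTh α k ∈ Set.Ioo (0 : ℝ) 1 := by
  induction k with
  | zero => exact ⟨hirr, hmem⟩
  | succ m ih =>
    obtain ⟨hir, h0, h1⟩ := ih
    have hinv : Irrational (cfTh α m)⁻¹ := hir.inv
    have hfr : Irrational (Int.fract (cfTh α m)⁻¹) := by
      have : Int.fract (cfTh α m)⁻¹ = (cfTh α m)⁻¹ - ⌊(cfTh α m)⁻¹⌋ := rfl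
      rw [this]
      exact hinv.sub_intCast _
    rw [cfTh_succ]
    refine ⟨hfr, ?_, Int.fract_lt_one _⟩
    rcases lt_or_eq_of_le (Int.fract_nonneg (cfTh α m)⁻¹) with h | h
    · exact h
    · exact absurd (by exact_mod_cast h.symm : Int.fract (cfTh α m)⁻¹ = ((0:ℤ):ℝ)) (hfr.ne_int 0)

lemma cfA_succ_eq (α : ℝ) (k : ℕ) : cfA α (k + 1) = (⌊(cfTh α k)⁻¹⌋).toNat := rfl

lemma cfA_pos (α : ℝ) (hmem : α ∈ Set.Ioo (0 : ℝ) 1) (hirr : Irrational α) (k : ℕ) :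
    1 ≤ cfA α (k + 1) := by
  obtain ⟨_, h0, h1⟩ := cfTh_prop α hmem hirr k
  have hlt : (1 : ℝ) < (cfTh α k)⁻¹ := one_lt_inv_iff₀.mpr ⟨h0, h1⟩
  have : (1 : ℤ) ≤ ⌊(cfTh α k)⁻¹⌋ := Int.le_floor.mpr (by exact_mod_cast hlt.le)
  rw [cfA_succ_eq]
  omega

lemma cfA_key (α : ℝ) (hmem : α ∈ Set.Ioo (0 : ℝ) 1) (hirr : Irrational α) (k : ℕ) :
    (cfA α (k + 1) : ℝ) * cfTh α k = 1 - cfTh α k * cfTh α (k + 1) := by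
  obtain ⟨_, h0, h1⟩ := cfTh_prop α hmem hirr k
  have hlt : (1 : ℝ) < (cfTh α k)⁻¹ := one_lt_inv_iff₀.mpr ⟨h0, h1⟩
  have hfl : (1 : ℤ) ≤ ⌊(cfTh α k)⁻¹⌋ := Int.le_floor.mpr (by exact_mod_cast hlt.le)
  have hcast : ((cfA α (k + 1) : ℕ) : ℝ) = (⌊(cfTh α k)⁻¹⌋ : ℝ) := by
    rw [cfA_succ_eq]
    exact_mod_cast congrArg (Int.cast : ℤ → ℝ) (Int.toNat_of_nonneg (by omega))
  have hfr : cfTh α (k + 1) = (cfTh α k)⁻¹ - ⌊(cfTh α k)⁻¹⌋ := by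
    rw [cfTh_succ]; rfl
  rw [hcast, hfr]
  field_simp
  ring

lemma cfQ_pos (α : ℝ) (hmem : α ∈ Set.Ioo (0 : ℝ) 1) (hirr : Irrational α) :
    ∀ k, 1 ≤ cfQ α k
  | 0 => le_refl _
  | 1 => cfA_pos α hmem hirr 0
  | (n + 2) => by
      have h1 := cfQ_pos α hmem hirr n
      have h2 := cfQ_pos α hmem hirr (n + 1)
      have h3 := cfA_pos α hmem hirr (n + 1)
      show 1 ≤ cfA α (n + 2) * cfQ α (n + 1) + cfQ α n
      nlinarith

lemma cfEta_pos (α : ℝ) (hmem : α ∈ Set.Ioo (0 : ℝ) 1) (hirr : Irrational α) (k : ℕ) :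
    0 < cfEta α k :=
  Finset.prod_pos fun j _ => (cfTh_prop α hmem hirr j).2.1

lemma cfEta_succ (α : ℝ) (k : ℕ) : cfEta α (k + 1) = cfEta α k * cfTh α (k + 1) :=
  Finset.prod_range_succ _ _

lemma cfBeta (α : ℝ) (hmem : α ∈ Set.Ioo (0 : ℝ) 1) (hirr : Irrational α) :
    ∀ k, (cfQ α k : ℝ) * α - (cfP α k : ℝ) = (-1) ^ k * cfEta α k
  | 0 => by
      have : cfEta α 0 = α := by
        unfold cfEta
        simp [cfTh_zero]
      simp [cfQ, cfP, this]
  | 1 => by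
      have hk := cfA_key α hmem hirr 0
      rw [cfTh_zero] at hk
      have he : cfEta α 1 = α * cfTh α 1 := by
        rw [cfEta_succ]
        have : cfEta α 0 = α := by unfold cfEta; simp [cfTh_zero]
        rw [this]
      show (cfA α 1 : ℝ) * α - ((1 : ℤ) : ℝ) = (-1) ^ 1 * cfEta α 1
      rw [he]
      push_cast
      linarith [hk]
  | (k + 2) => by
      have h1 := cfBeta α hmem hirr k
      have h2 := cfBeta α hmem hirr (k + 1)
      have hk := cfA_key α hmem hirr (k + 1)
      have he1 : cfEta α (k + 1) = cfEta α k * cfTh α (k + 1) := cfEta_succ α k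
      have he2 : cfEta α (k + 2) = cfEta α (k + 1) * cfTh α (k + 2) := cfEta_succ α (k + 1)
      show ((cfA α (k + 2) * cfQ α (k + 1) + cfQ α k : ℕ) : ℝ) * α
          - ((cfA α (k + 2) * cfP α (k + 1) + cfP α k : ℤ) : ℝ)
          = (-1) ^ (k + 2) * cfEta α (k + 2)
      push_cast
      rw [he2, he1]
      rw [he1] at h2
      linear_combination ((cfA α (k + 2) : ℝ)) * h2 + h1 - (-1) ^ k * cfEta α k * hk

lemma cfDet (α : ℝ) (hmem : α ∈ Set.Ioo (0 : ℝ) 1) (hirr : Irrational α) :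
    ∀ k, cfP α (k + 1) * (cfQ α k : ℤ) - cfP α k * (cfQ α (k + 1) : ℤ) = (-1) ^ k
  | 0 => by simp [cfP, cfQ]
  | (k + 1) => by
      have ih := cfDet α hmem hirr k
      have hp : cfP α (k + 2) = cfA α (k + 2) * cfP α (k + 1) + cfP α k := rfl
      have hq : (cfQ α (k + 2) : ℤ) = (cfA α (k + 2) : ℤ) * cfQ α (k + 1) + cfQ α k := by
        show ((cfA α (k + 2) * cfQ α (k + 1) + cfQ α k : ℕ) : ℤ) = _
        push_cast
        ring
      rw [hp, hq]
      linear_combination (-1 : ℤ) * ih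

/-- For irrational `α ∈ (0,1)` with partial quotients `(a_i)` and convergent
denominators `(q_n)`, `i ≥ 1`: every integer `n` with `q_i ≤ n ≤ q_{i+1}` which is not of
the form `m q_i` with `1 ≤ m ≤ a_{i+1}` nor of the form `q_{i+1} - m q_i` with
`0 ≤ m ≤ a_{i+1} - 1` satisfies `‖nα‖ > ‖a_{i+1} q_i α‖`. -/
theorem statement11 (α : ℝ) (hmem : α ∈ Set.Ioo (0 : ℝ) 1) (hirr : Irrational α)
    (i : ℕ) (hi : 1 ≤ i) (n : ℕ)
    (hn1 : cfQ α i ≤ n) (hn2 : n ≤ cfQ α (i + 1))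
    (h1 : ¬ ∃ m : ℕ, 1 ≤ m ∧ m ≤ cfA α (i + 1) ∧ n = m * cfQ α i)
    (h2 : ¬ ∃ m : ℕ, m ≤ cfA α (i + 1) - 1 ∧ n = cfQ α (i + 1) - m * cfQ α i) :
    nint (((cfA α (i + 1) * cfQ α i : ℕ) : ℝ) * α) < nint ((n : ℝ) * α) := by
  obtain ⟨j, rfl⟩ : ∃ j, i = j + 1 := ⟨i - 1, by omega⟩
  have hidx : j + 1 + 1 = j + 2 := rfl
  rw [hidx] at h1 h2 hn2 ⊢
  have hbi := cfBeta α hmem hirr (j + 1)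
  have hbi1 := cfBeta α hmem hirr (j + 2)
  have hdet := cfDet α hmem hirr (j + 1)
  have hetai := cfEta_pos α hmem hirr (j + 1)
  have hetai1 := cfEta_pos α hmem hirr (j + 2)
  have hapos : 1 ≤ cfA α (j + 2) := cfA_pos α hmem hirr (j + 1)
  have hqipos : 1 ≤ cfQ α (j + 1) := cfQ_pos α hmem hirr (j + 1)
  have hqjpos : 1 ≤ cfQ α j := cfQ_pos α hmem hirr j
  have hqrec : cfQ α (j + 2) = cfA α (j + 2) * cfQ α (j + 1) + cfQ α j := rfl
  set a := cfA α (j + 2) with ha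
  set qi := cfQ α (j + 1) with hqidef
  set qi1 := cfQ α (j + 2) with hqi1def
  set pi := cfP α (j + 1) with hpidef
  set pi1 := cfP α (j + 2) with hpi1def
  set E := cfEta α (j + 1) with hEdef
  set F := cfEta α (j + 2) with hFdef
  -- Step 1 : nint (a qi α) ≤ a E
  have step1 : nint (((a * qi : ℕ) : ℝ) * α) ≤ (a : ℝ) * E := by
    have hr := round_le (((a * qi : ℕ) : ℝ) * α) ((a : ℤ) * pi)
    have heq : ((a * qi : ℕ) : ℝ) * α - (((a : ℤ) * pi : ℤ) : ℝ)
        = (a : ℝ) * ((qi : ℝ) * α - (pi : ℝ)) := by push_cast; ring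
    have habs : |((a * qi : ℕ) : ℝ) * α - (((a : ℤ) * pi : ℤ) : ℝ)| = (a : ℝ) * E := by
      rw [heq, hbi, abs_mul, abs_mul, abs_pow, abs_neg, abs_one, one_pow, one_mul,
        abs_of_nonneg (le_of_lt hetai), Nat.abs_cast]
    show |((a * qi : ℕ) : ℝ) * α - round (((a * qi : ℕ) : ℝ) * α)| ≤ (a : ℝ) * E
    rw [← habs]
    exact hr
  by_contra hcon
  push_neg at hcon
  set p : ℤ := round ((n : ℝ) * α) with hpdef
  have heps : |(n : ℝ) * α - (p : ℝ)| ≤ (a : ℝ) * E := le_trans hcon step1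
  set σ : ℤ := (-1) ^ (j + 1) with hσdef
  have hσ2 : σ * σ = 1 := by
    rw [hσdef, ← pow_add]
    exact Even.neg_one_pow ⟨j + 1, rfl⟩
  set x : ℤ := σ * ((n : ℤ) * pi1 - p * (qi1 : ℤ)) with hxdef
  set y : ℤ := σ * (p * (qi : ℤ) - (n : ℤ) * pi) with hydef
  have hxq : x * (qi : ℤ) + y * (qi1 : ℤ) = (n : ℤ) := by
    rw [hxdef, hydef]
    linear_combination (σ * (n : ℤ)) * hdet + (n : ℤ) * hσ2
  have hxp : x * pi + y * pi1 = p := by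
    rw [hxdef, hydef]
    linear_combination (σ * p) * hdet + p * hσ2
  clear_value a qi qi1 pi pi1 E F p σ x y
  clear hxdef hydef hσdef hpdef hEdef hFdef hpidef hpi1def hqidef hqi1def ha hdet hσ2 step1 hcon
  have hxqR : (x : ℝ) * (qi : ℝ) + (y : ℝ) * (qi1 : ℝ) = (n : ℝ) := by exact_mod_cast hxq
  have hxpR : (x : ℝ) * (pi : ℝ) + (y : ℝ) * (pi1 : ℝ) = (p : ℝ) := by exact_mod_cast hxp
  have hformR : (n : ℝ) * α - (p : ℝ) = (-1 : ℝ) ^ (j + 1) * ((x : ℝ) * E - (y : ℝ) * F) := by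
    have e1 : (n : ℝ) * α - (p : ℝ)
        = (x : ℝ) * ((qi : ℝ) * α - (pi : ℝ)) + (y : ℝ) * ((qi1 : ℝ) * α - (pi1 : ℝ)) := by
      linear_combination (-α) * hxqR + hxpR
    rw [e1, hbi, hbi1]
    ring
  have habs2 : |(x : ℝ) * E - (y : ℝ) * F| ≤ (a : ℝ) * E := by
    have h := heps
    rw [hformR, abs_mul, abs_pow, abs_neg, abs_one, one_pow, one_mul] at h
    exact h
  -- integer facts
  have hnZ1 : (qi : ℤ) ≤ (n : ℤ) := by exact_mod_cast hn1
  have hnZ2 : (n : ℤ) ≤ (qi1 : ℤ) := by exact_mod_cast hn2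
  have hq1Z : (qi1 : ℤ) = (a : ℤ) * (qi : ℤ) + (cfQ α j : ℤ) := by exact_mod_cast hqrec
  have hqiZ : (1 : ℤ) ≤ (qi : ℤ) := by exact_mod_cast hqipos
  have hqjZ : (1 : ℤ) ≤ (cfQ α j : ℤ) := by exact_mod_cast hqjpos
  have haZ : (1 : ℤ) ≤ (a : ℤ) := by exact_mod_cast hapos
  have hcase : y ≤ -1 ∨ y = 0 ∨ y = 1 ∨ 2 ≤ y := by omega
  rcases hcase with hy | hy | hy | hy
  · -- y ≤ -1 : x ≥ a + 1, contradiction with habs2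
    have h5a : y * (qi1 : ℤ) ≤ -1 * qi1 := mul_le_mul_of_nonneg_right hy (by omega)
    have h5 : (a : ℤ) * (qi : ℤ) + (qi : ℤ) + 1 ≤ x * (qi : ℤ) := by omega
    have h6 : (a : ℤ) + 1 ≤ x := by
      by_contra hc
      push_neg at hc
      have : x * (qi : ℤ) ≤ (a : ℤ) * qi :=
        mul_le_mul_of_nonneg_right (by omega) (by omega)
      omega
    have hxR : (a : ℝ) + 1 ≤ (x : ℝ) := by exact_mod_cast h6
    have hyR : (y : ℝ) ≤ -1 := by exact_mod_cast hy
    have h7a : ((a : ℝ) + 1) * E ≤ (x : ℝ) * E := mul_le_mul_of_nonneg_right hxR hetai.le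
    have h7b : F ≤ (-(y : ℝ)) * F := le_mul_of_one_le_left hetai1.le (by linarith)
    have h7 : ((a : ℝ) + 1) * E + F ≤ (x : ℝ) * E - (y : ℝ) * F := by linarith [h7a, h7b]
    linarith [le_abs_self ((x : ℝ) * E - (y : ℝ) * F)]
  · -- y = 0 : n = x * qi with 1 ≤ x ≤ a
    subst hy
    have hxqi : x * (qi : ℤ) = (n : ℤ) := by linarith [hxq]
    have hx1 : 1 ≤ x := by
      by_contra hc
      push_neg at hc
      have : x * (qi : ℤ) ≤ 0 :=
        mul_nonpos_iff.mpr (Or.inr ⟨by omega, by omega⟩)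
      omega
    have hxRa : (x : ℝ) ≤ (a : ℝ) := by
      have hxR1 : (1 : ℝ) ≤ (x : ℝ) := by exact_mod_cast hx1
      have h := habs2
      rw [Int.cast_zero, zero_mul, sub_zero, abs_mul,
        abs_of_nonneg (by linarith : (0:ℝ) ≤ (x:ℝ)), abs_of_nonneg (le_of_lt hetai)] at h
      exact le_of_mul_le_mul_right h hetai
    have hxa : x ≤ (a : ℤ) := by exact_mod_cast hxRa
    apply h1
    refine ⟨x.toNat, by omega, by omega, ?_⟩
    have : ((x.toNat * qi : ℕ) : ℤ) = (n : ℤ) := by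
      push_cast
      rw [Int.toNat_of_nonneg (by omega)]
      exact hxqi
    exact_mod_cast this.symm
  · -- y = 1 : n = qi1 - m * qi with m ≤ a - 1
    subst hy
    have hxqi : x * (qi : ℤ) + (qi1 : ℤ) = (n : ℤ) := by linarith [hxq]
    have hx0 : x ≤ 0 := by
      by_contra hc
      push_neg at hc
      have : (qi : ℤ) ≤ x * qi := le_mul_of_one_le_left (by omega) hc
      omega
    have hxR0 : (x : ℝ) ≤ 0 := by exact_mod_cast hx0
    have hxE : (x : ℝ) * E ≤ 0 := mul_nonpos_iff.mpr (Or.inr ⟨hxR0, hetai.le⟩)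
    have hvneg : (x : ℝ) * E - (1 : ℝ) * F < 0 := by linarith
    have h8 : -((x : ℝ)) < (a : ℝ) := by
      have h := habs2
      rw [Int.cast_one, one_mul] at h
      have habs3 : -((x : ℝ) * E - F) ≤ (a : ℝ) * E := le_trans (neg_le_abs _) h
      have : -((x : ℝ)) * E < (a : ℝ) * E := by linarith [hetai1, habs3]
      exact lt_of_mul_lt_mul_right this hetai.le
    have h9 : -x < (a : ℤ) := by exact_mod_cast h8
    apply h2
    refine ⟨(-x).toNat, by omega, ?_⟩
    have h10 : ((n + (-x).toNat * qi : ℕ) : ℤ) = (qi1 : ℤ) := by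
      push_cast
      rw [Int.toNat_of_nonneg (by omega)]
      linarith
    have h11 : n + (-x).toNat * qi = qi1 := by exact_mod_cast h10
    omega
  · -- 2 ≤ y : x ≤ -(a+1), contradiction
    have h5a : 2 * (qi1 : ℤ) ≤ y * qi1 := mul_le_mul_of_nonneg_right hy (by omega)
    have h5 : x * (qi : ℤ) + (a : ℤ) * (qi : ℤ) ≤ -1 := by omega
    have h6 : x ≤ -((a : ℤ) + 1) := by
      by_contra hc
      push_neg at hc
      have hmul : (0 : ℤ) ≤ (x + a) * qi := mul_nonneg (by omega) (by omega)
      linarith [hmul, h5]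
    have hxR : (x : ℝ) ≤ -((a : ℝ) + 1) := by exact_mod_cast h6
    have hyR : (2 : ℝ) ≤ (y : ℝ) := by exact_mod_cast hy
    have h7a : (x : ℝ) * E ≤ (-((a : ℝ) + 1)) * E := mul_le_mul_of_nonneg_right hxR hetai.le
    have h7b : 2 * F ≤ (y : ℝ) * F := mul_le_mul_of_nonneg_right hyR hetai1.le
    have h7 : (x : ℝ) * E - (y : ℝ) * F ≤ -(((a : ℝ) + 1) * E) - 2 * F := by linarith [h7a, h7b]
    linarith [neg_abs_le ((x : ℝ) * E - (y : ℝ) * F)]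
end
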